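/- For every finite simple subcubic graph G of odd order n, R(G) ≤ 1; that is, |λ_{(n+1)/2}(G)| ≤ 1. -/

import Mathlib

open SimpleGraph Matrix

theorem adjMatrix_isHermitian {V : Type} [Fintype V] [DecidableEq V]
    (G : SimpleGraph V) [DecidableRel G.Adj] : (G.adjMatrix ℝ).IsHermitian := by
  ext i j
  simp [Matrix.conjTranspose_apply, SimpleGraph.adj_comm]

/-- Multiset of adjacency eigenvalues. -/
noncomputable def adjSpectrum {V : Type} [Fintype V] [DecidableEq V]
    (G : SimpleGraph V) [DecidableRel G.Adj] : Multiset ℝ :=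
  Finset.univ.val.map (adjMatrix_isHermitian G).eigenvalues

/-- the i-th largest adjacency eigenvalue (1-indexed). -/
noncomputable def eigval {V : Type} [Fintype V] [DecidableEq V]
    (G : SimpleGraph V) [DecidableRel G.Adj] (i : ℕ) : ℝ :=
  ((adjSpectrum G).sort (· ≤ ·)).getD (Fintype.card V - i) 0


section HLAux

open Finset in
theorem hl_aux_lovasz_partition {V : Type} [Fintype V] [DecidableEq V]
    (G : SimpleGraph V) [DecidableRel G.Adj] (hdeg : ∀ v : V, G.degree v ≤ 3) :
    ∃ S : Finset V, Fintype.card V ≤ 2 * S.card ∧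
      ∀ v ∈ S, ((G.neighborFinset v) ∩ S).card ≤ 1 := by
  classical
  set c : V → Finset V → ℕ := fun v T => ((G.neighborFinset v) ∩ T).card with hc_def
  set cost : Finset V → ℕ := fun T => (∑ u ∈ T, c u T) + ∑ u ∈ Tᶜ, c u Tᶜ with hcost_def
  -- basic helper: inserting v into T
  have hins : ∀ (u v : V) (T : Finset V), v ∉ T →
      c u (insert v T) = c u T + if u ∈ G.neighborFinset v then 1 else 0 := by
    intro u v T hv
    by_cases h : v ∈ G.neighborFinset u
    · have huv : u ∈ G.neighborFinset v := by
        rw [mem_neighborFinset] at h ⊢; exact h.symm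
      rw [if_pos huv]
      have : G.neighborFinset u ∩ insert v T = insert v (G.neighborFinset u ∩ T) := by
        rw [inter_comm, insert_inter_of_mem h, inter_comm]
      rw [hc_def]
      simp only [this]
      rw [card_insert_of_notMem (fun hmem => hv (mem_inter.1 hmem).2)]
    · have huv : u ∉ G.neighborFinset v := by
        rw [mem_neighborFinset] at h ⊢; exact fun hh => h hh.symm
      rw [if_neg huv]
      have : G.neighborFinset u ∩ insert v T = G.neighborFinset u ∩ T := by
        rw [inter_comm, insert_inter_of_notMem h, inter_comm]
      simp [hc_def, this]
  have hvins : ∀ (v : V) (T : Finset V), c v (insert v T) = c v T := by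
    intro v T
    have : G.neighborFinset v ∩ insert v T = G.neighborFinset v ∩ T := by
      rw [inter_comm, insert_inter_of_notMem (G.notMem_neighborFinset_self v), inter_comm]
    simp [hc_def, this]
  -- sum of indicators
  have hsum_ind : ∀ (v : V) (T : Finset V),
      (∑ u ∈ T, if u ∈ G.neighborFinset v then 1 else 0) = c v T := by
    intro v T
    rw [Finset.sum_ite_mem, hc_def, inter_comm]
    exact (Finset.card_eq_sum_ones _).symm
  -- the flip identity
  have flip : ∀ (T : Finset V) (v : V), v ∉ T →
      cost (insert v T) + 2 * c v Tᶜ = cost T + 2 * c v T := by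
    intro T v hv
    have hvc : v ∈ Tᶜ := mem_compl.2 hv
    have hUc : (insert v T)ᶜ = Tᶜ.erase v := compl_insert
    have hf1 : (∑ u ∈ insert v T, c u (insert v T)) = (∑ u ∈ T, c u T) + 2 * c v T := by
      rw [Finset.sum_insert hv, hvins]
      have : ∀ u ∈ T, c u (insert v T) = c u T + if u ∈ G.neighborFinset v then 1 else 0 :=
        fun u _ => hins u v T hv
      rw [Finset.sum_congr rfl this, Finset.sum_add_distrib, hsum_ind]
      ring
    have hTc : Tᶜ = insert v (Tᶜ.erase v) := (insert_erase hvc).symm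
    have hf2 : (∑ u ∈ Tᶜ, c u Tᶜ) =
        (∑ u ∈ Tᶜ.erase v, c u (Tᶜ.erase v)) + 2 * c v (Tᶜ.erase v) := by
      conv_lhs => rw [hTc]
      rw [Finset.sum_insert (notMem_erase v _), hvins]
      have : ∀ u ∈ Tᶜ.erase v, c u (insert v (Tᶜ.erase v))
          = c u (Tᶜ.erase v) + if u ∈ G.neighborFinset v then 1 else 0 :=
        fun u _ => hins u v _ (notMem_erase v _)
      rw [Finset.sum_congr rfl this, Finset.sum_add_distrib, hsum_ind]
      ring
    have hcv : c v (Tᶜ.erase v) = c v Tᶜ := by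
      conv_rhs => rw [hTc, hvins]
    rw [hcost_def]
    simp only [hUc, hf1, hf2, hcv]
    ring
  -- pick a minimizer
  obtain ⟨M, -, hmin⟩ := Finset.exists_min_image (Finset.univ : Finset (Finset V)) cost
    ⟨∅, mem_univ _⟩
  have hmin' : ∀ T, cost M ≤ cost T := fun T => hmin T (mem_univ T)
  -- degree split
  have hsplit : ∀ (v : V), c v M + c v Mᶜ = G.degree v := by
    intro v
    rw [hc_def]
    simp only [← sdiff_eq_inter_compl]
    rw [card_inter_add_card_sdiff]
    exact (G.card_neighborFinset_eq_degree v)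
  have hM1 : ∀ v ∈ M, c v M ≤ 1 := by
    intro v hvM
    by_contra h
    push_neg at h
    have hvnc : v ∉ Mᶜ := fun hh => (mem_compl.1 hh) hvM
    have := flip Mᶜ v hvnc
    rw [compl_compl] at this
    have h2 := hmin' (insert v Mᶜ)
    have hcostc : cost Mᶜ = cost M := by rw [hcost_def]; simp [compl_compl]; ring
    have hle : c v M ≤ c v Mᶜ := by omega
    have := hsplit v
    have := hdeg v
    omega
  have hM2 : ∀ v ∈ Mᶜ, c v Mᶜ ≤ 1 := by
    intro v hvc
    by_contra h
    push_neg at h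
    have hvM : v ∉ M := mem_compl.1 hvc
    have := flip M v hvM
    have h2 := hmin' (insert v M)
    have hle : c v Mᶜ ≤ c v M := by omega
    have := hsplit v
    have := hdeg v
    omega
  have hcard := Finset.card_add_card_compl M
  by_cases hbig : Fintype.card V ≤ 2 * M.card
  · exact ⟨M, hbig, hM1⟩
  · exact ⟨Mᶜ, by omega, hM2⟩

open Finset in
theorem hl_aux_rayleigh_bound {V : Type} [Fintype V] [DecidableEq V]
    (G : SimpleGraph V) [DecidableRel G.Adj] (S : Finset V)
    (hS : ∀ v ∈ S, ((G.neighborFinset v) ∩ S).card ≤ 1)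
    (x : V → ℝ) (hx : ∀ v ∉ S, x v = 0) :
    |x ⬝ᵥ ((G.adjMatrix ℝ) *ᵥ x)| ≤ x ⬝ᵥ x := by
  classical
  -- rewrite the quadratic form
  have hform : x ⬝ᵥ ((G.adjMatrix ℝ) *ᵥ x)
      = ∑ v ∈ S, x v * ∑ u ∈ (G.neighborFinset v ∩ S), x u := by
    rw [dotProduct]
    rw [← Finset.sum_subset (Finset.subset_univ S)
      (by intro v _ hv; rw [hx v hv, zero_mul])]
    refine Finset.sum_congr rfl (fun v _ => ?_)
    rw [SimpleGraph.adjMatrix_mulVec_apply]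
    congr 1
    rw [← Finset.sum_subset (Finset.inter_subset_left)
      (by intro u hu hu2; exact hx u (fun huS => hu2 (Finset.mem_inter.2 ⟨hu, huS⟩)))]
  set m : V → V := fun v => if h : (G.neighborFinset v ∩ S).Nonempty then h.choose else v
    with hm_def
  have hsingle : ∀ v ∈ S, (G.neighborFinset v ∩ S).Nonempty →
      G.neighborFinset v ∩ S = {m v} := by
    intro v hv hne
    have hmem : m v ∈ G.neighborFinset v ∩ S := by
      rw [hm_def]; simp only [dif_pos hne]; exact hne.choose_spec
    refine Finset.eq_singleton_iff_unique_mem.2 ⟨hmem, fun y hy => ?_⟩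
    exact Finset.card_le_one.1 (hS v hv) y hy (m v) hmem
  have hmS : ∀ v ∈ S, m v ∈ S := by
    intro v hv
    by_cases hne : (G.neighborFinset v ∩ S).Nonempty
    · have := hsingle v hv hne
      have hmem : m v ∈ G.neighborFinset v ∩ S := by
        rw [hm_def]; simp only [dif_pos hne]; exact hne.choose_spec
      exact (Finset.mem_inter.1 hmem).2
    · rw [hm_def]; simp only [dif_neg hne]; exact hv
  have hinv : ∀ v ∈ S, m (m v) = v := by
    intro v hv
    by_cases hne : (G.neighborFinset v ∩ S).Nonempty
    · have hmem : m v ∈ G.neighborFinset v ∩ S := by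
        rw [hm_def]; simp only [dif_pos hne]; exact hne.choose_spec
      obtain ⟨hadj, hmS'⟩ := Finset.mem_inter.1 hmem
      have hvmem : v ∈ G.neighborFinset (m v) ∩ S := by
        refine Finset.mem_inter.2 ⟨?_, hv⟩
        rw [mem_neighborFinset] at hadj ⊢; exact hadj.symm
      have hne2 : (G.neighborFinset (m v) ∩ S).Nonempty := ⟨v, hvmem⟩
      have hsing2 := hsingle (m v) hmS' hne2
      have : v ∈ ({m (m v)} : Finset V) := by rw [← hsing2]; exact hvmem
      exact (Finset.mem_singleton.1 this).symm
    · have h1 : m v = v := by rw [hm_def]; exact dif_neg hne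
      rw [h1]; exact h1
  -- bound each term
  have hterm : ∀ v ∈ S, |x v * ∑ u ∈ (G.neighborFinset v ∩ S), x u|
      ≤ (x v ^ 2 + x (m v) ^ 2) / 2 := by
    intro v hv
    by_cases hne : (G.neighborFinset v ∩ S).Nonempty
    · rw [hsingle v hv hne, Finset.sum_singleton, abs_mul]
      nlinarith [abs_nonneg (x v), abs_nonneg (x (m v)), sq_abs (x v), sq_abs (x (m v)),
        sq_nonneg (|x v| - |x (m v)|)]
    · rw [Finset.not_nonempty_iff_eq_empty.1 hne, Finset.sum_empty, mul_zero, abs_zero]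
      positivity
  have hreindex : ∑ v ∈ S, x (m v) ^ 2 = ∑ v ∈ S, x v ^ 2 :=
    Finset.sum_nbij' (fun v => m v) (fun v => m v)
      (fun v hv => hmS v hv) (fun v hv => hmS v hv)
      (fun v hv => hinv v hv) (fun v hv => hinv v hv)
      (fun v hv => rfl)
  calc |x ⬝ᵥ ((G.adjMatrix ℝ) *ᵥ x)|
      = |∑ v ∈ S, x v * ∑ u ∈ (G.neighborFinset v ∩ S), x u| := by rw [hform]
    _ ≤ ∑ v ∈ S, |x v * ∑ u ∈ (G.neighborFinset v ∩ S), x u| := Finset.abs_sum_le_sum_abs _ _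
    _ ≤ ∑ v ∈ S, (x v ^ 2 + x (m v) ^ 2) / 2 := Finset.sum_le_sum hterm
    _ = ∑ v ∈ S, x v ^ 2 := by
        rw [← Finset.sum_div, Finset.sum_add_distrib, hreindex]
        ring
    _ ≤ ∑ v ∈ Finset.univ, x v ^ 2 :=
        Finset.sum_le_sum_of_subset_of_nonneg (Finset.subset_univ S)
          (fun v _ _ => sq_nonneg _)
    _ = x ⬝ᵥ x := by rw [dotProduct]; exact Finset.sum_congr rfl (fun v _ => (sq (x v)).symm ▸ by ring)

theorem hl_aux_dot_eq_inner {V : Type} [Fintype V] (x y : EuclideanSpace ℝ V) : (inner ℝ x y : ℝ) = (x : V → ℝ) ⬝ᵥ (y : V → ℝ) := by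
  simp [PiLp.inner_apply, dotProduct, mul_comm]

theorem hl_aux_herm_repr_mulVec {V : Type} [Fintype V] [DecidableEq V] {A : Matrix V V ℝ} (hA : A.IsHermitian) (x : EuclideanSpace ℝ V) (i : V) :
    hA.eigenvectorBasis.repr (WithLp.toLp 2 (A *ᵥ x : V → ℝ) : EuclideanSpace ℝ V) i
      = hA.eigenvalues i * hA.eigenvectorBasis.repr x i := by
  have hAT : Aᵀ = A := by
    ext i j
    rw [Matrix.transpose_apply]
    conv_rhs => rw [← hA.eq]
    rw [Matrix.conjTranspose_apply, star_trivial]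
  rw [OrthonormalBasis.repr_apply_apply, OrthonormalBasis.repr_apply_apply,
    hl_aux_dot_eq_inner, hl_aux_dot_eq_inner]
  show (hA.eigenvectorBasis i : V → ℝ) ⬝ᵥ (A *ᵥ x) = _
  rw [Matrix.dotProduct_mulVec, ← Matrix.mulVec_transpose, hAT,
    show A *ᵥ (hA.eigenvectorBasis i : V → ℝ) = hA.eigenvalues i • (hA.eigenvectorBasis i : V → ℝ)
      from hA.mulVec_eigenvectorBasis i,
    smul_dotProduct]
  rfl

theorem hl_aux_herm_form_eq {V : Type} [Fintype V] [DecidableEq V] {A : Matrix V V ℝ} (hA : A.IsHermitian) (x : EuclideanSpace ℝ V) :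
    (x : V → ℝ) ⬝ᵥ (A *ᵥ x) = ∑ i, hA.eigenvalues i * (hA.eigenvectorBasis.repr x i)^2 ∧
    (x : V → ℝ) ⬝ᵥ (x : V → ℝ) = ∑ i, (hA.eigenvectorBasis.repr x i)^2 := by
  constructor
  · rw [← hl_aux_dot_eq_inner x (WithLp.toLp 2 (A *ᵥ x : V → ℝ) : EuclideanSpace ℝ V),
      ← hA.eigenvectorBasis.repr.inner_map_map x _, hl_aux_dot_eq_inner, dotProduct]
    refine Finset.sum_congr rfl (fun i _ => ?_)
    rw [show (hA.eigenvectorBasis.repr (WithLp.toLp 2 ((A *ᵥ x : V → ℝ)) : EuclideanSpace ℝ V) : V → ℝ) i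
      = hA.eigenvalues i * hA.eigenvectorBasis.repr x i from hl_aux_herm_repr_mulVec hA x i]
    ring
  · rw [← hl_aux_dot_eq_inner x x, ← hA.eigenvectorBasis.repr.inner_map_map x x, hl_aux_dot_eq_inner,
      dotProduct]
    refine Finset.sum_congr rfl (fun i _ => ?_)
    ring

theorem hl_aux_count_eig_gt {V : Type} [Fintype V] [DecidableEq V] {A : Matrix V V ℝ} (hA : A.IsHermitian) (S : Finset V) (κ : ℝ)
    (hray : ∀ x : V → ℝ, (∀ v ∉ S, x v = 0) → x ⬝ᵥ (A *ᵥ x) ≤ κ * (x ⬝ᵥ x)) :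
    (Finset.univ.filter fun i => κ < hA.eigenvalues i).card ≤ Fintype.card V - S.card := by
  classical
  by_contra hcon
  push_neg at hcon
  set P := Finset.univ.filter fun i => κ < hA.eigenvalues i with hP
  set Q := Finset.univ.filter fun i => ¬ κ < hA.eigenvalues i with hQ
  have hPQ : P.card + Q.card = Fintype.card V := by
    rw [hP, hQ, Finset.card_filter_add_card_filter_not, Finset.card_univ]
  have hSle : S.card ≤ Fintype.card V := Finset.card_le_univ S
  have hQS : Q.card < S.card := by omega
  -- build the linear map
  let f1 : (↥S → ℝ) →ₗ[ℝ] EuclideanSpace ℝ V :=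
    { toFun := fun y => (WithLp.toLp 2 (fun v => if h : v ∈ S then y ⟨v, h⟩ else 0) : EuclideanSpace ℝ V)
      map_add' := by
        intro y z; ext v; by_cases h : v ∈ S <;> simp [h]
      map_smul' := by
        intro t y; ext v; by_cases h : v ∈ S <;> simp [h] }
  let L : (↥S → ℝ) →ₗ[ℝ] (↥Q → ℝ) :=
    (LinearMap.funLeft ℝ ℝ (Subtype.val : ↥Q → V)) ∘ₗ
      ((WithLp.linearEquiv 2 ℝ (V → ℝ) : EuclideanSpace ℝ V ≃ₗ[ℝ] (V → ℝ)) :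
        EuclideanSpace ℝ V →ₗ[ℝ] (V → ℝ)) ∘ₗ
      ((hA.eigenvectorBasis.repr.toLinearEquiv :
        EuclideanSpace ℝ V ≃ₗ[ℝ] EuclideanSpace ℝ V) :
        EuclideanSpace ℝ V →ₗ[ℝ] EuclideanSpace ℝ V) ∘ₗ f1
  have hdom : Module.finrank ℝ (↥S → ℝ) = S.card := by
    rw [Module.finrank_fintype_fun_eq_card, Fintype.card_coe]
  have hcod : Module.finrank ℝ (↥Q → ℝ) = Q.card := by
    rw [Module.finrank_fintype_fun_eq_card, Fintype.card_coe]
  have hker : 0 < Module.finrank ℝ ↥(LinearMap.ker L) := by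
    have h1 := LinearMap.finrank_range_add_finrank_ker L
    have h2 : Module.finrank ℝ ↥(LinearMap.range L) ≤ Q.card := by
      rw [← hcod]; exact Submodule.finrank_le _
    rw [hdom] at h1
    omega
  obtain ⟨⟨y, hyker⟩, hy0⟩ := Module.finrank_pos_iff_exists_ne_zero.1 hker
  have hyne : y ≠ 0 := by
    intro h; apply hy0; exact Subtype.ext h
  set x : EuclideanSpace ℝ V := f1 y with hx_def
  have hxsupp : ∀ v ∉ S, (x : V → ℝ) v = 0 := by
    intro v hv
    show (if h : v ∈ S then y ⟨v, h⟩ else 0) = 0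
    rw [dif_neg hv]
  have hxne : x ≠ 0 := by
    intro h
    apply hyne
    funext ⟨v, hvS⟩
    have : (x : V → ℝ) v = 0 := by rw [h]; rfl
    rwa [show (x : V → ℝ) v = y ⟨v, hvS⟩ from by
      show (if h : v ∈ S then y ⟨v, h⟩ else 0) = y ⟨v, hvS⟩; rw [dif_pos hvS]] at this
  set c : EuclideanSpace ℝ V := hA.eigenvectorBasis.repr x with hc_def
  have hcQ : ∀ i ∈ Q, (c : V → ℝ) i = 0 := by
    intro i hi
    have : L y = 0 := hyker
    have := congrFun this ⟨i, hi⟩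
    exact this
  have hcne : c ≠ 0 := fun h => hxne (hA.eigenvectorBasis.repr.injective
    (by rw [← hc_def, h, map_zero]))
  obtain ⟨i0, hi0⟩ : ∃ i, (c : V → ℝ) i ≠ 0 := by
    by_contra h
    push_neg at h
    exact hcne (PiLp.ext h)
  have hi0P : κ < hA.eigenvalues i0 := by
    by_contra h
    exact hi0 (hcQ i0 (Finset.mem_filter.2 ⟨Finset.mem_univ _, h⟩))
  obtain ⟨hform1, hform2⟩ := hl_aux_herm_form_eq hA x
  rw [← hc_def] at hform1 hform2
  have hlt : κ * ((x : V → ℝ) ⬝ᵥ (x : V → ℝ)) < (x : V → ℝ) ⬝ᵥ (A *ᵥ (x : V → ℝ)) := by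
    rw [hform1, hform2, Finset.mul_sum]
    refine Finset.sum_lt_sum (fun i _ => ?_) ⟨i0, Finset.mem_univ _, ?_⟩
    · by_cases hiP : κ < hA.eigenvalues i
      · nlinarith [sq_nonneg ((c : V → ℝ) i)]
      · have : (c : V → ℝ) i = 0 := hcQ i (Finset.mem_filter.2 ⟨Finset.mem_univ _, hiP⟩)
        rw [this]; simp
    · have : 0 < ((c : V → ℝ) i0)^2 := by positivity
      nlinarith
  exact absurd (hray (x : V → ℝ) hxsupp) (not_le.2 hlt)

theorem hl_aux_count_eig_lt {V : Type} [Fintype V] [DecidableEq V] {A : Matrix V V ℝ} (hA : A.IsHermitian) (S : Finset V) (κ : ℝ)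
    (hray : ∀ x : V → ℝ, (∀ v ∉ S, x v = 0) → κ * (x ⬝ᵥ x) ≤ x ⬝ᵥ (A *ᵥ x)) :
    (Finset.univ.filter fun i => hA.eigenvalues i < κ).card ≤ Fintype.card V - S.card := by
  classical
  by_contra hcon
  push_neg at hcon
  set P := Finset.univ.filter fun i => hA.eigenvalues i < κ with hP
  set Q := Finset.univ.filter fun i => ¬ hA.eigenvalues i < κ with hQ
  have hPQ : P.card + Q.card = Fintype.card V := by
    rw [hP, hQ, Finset.card_filter_add_card_filter_not, Finset.card_univ]
  have hSle : S.card ≤ Fintype.card V := Finset.card_le_univ S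
  have hQS : Q.card < S.card := by omega
  let f1 : (↥S → ℝ) →ₗ[ℝ] EuclideanSpace ℝ V :=
    { toFun := fun y => (WithLp.toLp 2 (fun v => if h : v ∈ S then y ⟨v, h⟩ else 0) : EuclideanSpace ℝ V)
      map_add' := by
        intro y z; ext v; by_cases h : v ∈ S <;> simp [h]
      map_smul' := by
        intro t y; ext v; by_cases h : v ∈ S <;> simp [h] }
  let L : (↥S → ℝ) →ₗ[ℝ] (↥Q → ℝ) :=
    (LinearMap.funLeft ℝ ℝ (Subtype.val : ↥Q → V)) ∘ₗ
      ((WithLp.linearEquiv 2 ℝ (V → ℝ) : EuclideanSpace ℝ V ≃ₗ[ℝ] (V → ℝ)) :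
        EuclideanSpace ℝ V →ₗ[ℝ] (V → ℝ)) ∘ₗ
      ((hA.eigenvectorBasis.repr.toLinearEquiv :
        EuclideanSpace ℝ V ≃ₗ[ℝ] EuclideanSpace ℝ V) :
        EuclideanSpace ℝ V →ₗ[ℝ] EuclideanSpace ℝ V) ∘ₗ f1
  have hdom : Module.finrank ℝ (↥S → ℝ) = S.card := by
    rw [Module.finrank_fintype_fun_eq_card, Fintype.card_coe]
  have hcod : Module.finrank ℝ (↥Q → ℝ) = Q.card := by
    rw [Module.finrank_fintype_fun_eq_card, Fintype.card_coe]
  have hker : 0 < Module.finrank ℝ ↥(LinearMap.ker L) := by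
    have h1 := LinearMap.finrank_range_add_finrank_ker L
    have h2 : Module.finrank ℝ ↥(LinearMap.range L) ≤ Q.card := by
      rw [← hcod]; exact Submodule.finrank_le _
    rw [hdom] at h1
    omega
  obtain ⟨⟨y, hyker⟩, hy0⟩ := Module.finrank_pos_iff_exists_ne_zero.1 hker
  have hyne : y ≠ 0 := by
    intro h; apply hy0; exact Subtype.ext h
  set x : EuclideanSpace ℝ V := f1 y with hx_def
  have hxsupp : ∀ v ∉ S, (x : V → ℝ) v = 0 := by
    intro v hv
    show (if h : v ∈ S then y ⟨v, h⟩ else 0) = 0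
    rw [dif_neg hv]
  have hxne : x ≠ 0 := by
    intro h
    apply hyne
    funext ⟨v, hvS⟩
    have : (x : V → ℝ) v = 0 := by rw [h]; rfl
    rwa [show (x : V → ℝ) v = y ⟨v, hvS⟩ from by
      show (if h : v ∈ S then y ⟨v, h⟩ else 0) = y ⟨v, hvS⟩; rw [dif_pos hvS]] at this
  set c : EuclideanSpace ℝ V := hA.eigenvectorBasis.repr x with hc_def
  have hcQ : ∀ i ∈ Q, (c : V → ℝ) i = 0 := by
    intro i hi
    have : L y = 0 := hyker
    exact congrFun this ⟨i, hi⟩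
  have hcne : c ≠ 0 := fun h => hxne (hA.eigenvectorBasis.repr.injective
    (by rw [← hc_def, h, map_zero]))
  obtain ⟨i0, hi0⟩ : ∃ i, (c : V → ℝ) i ≠ 0 := by
    by_contra h
    push_neg at h
    exact hcne (PiLp.ext h)
  have hi0P : hA.eigenvalues i0 < κ := by
    by_contra h
    exact hi0 (hcQ i0 (Finset.mem_filter.2 ⟨Finset.mem_univ _, h⟩))
  obtain ⟨hform1, hform2⟩ := hl_aux_herm_form_eq hA x
  rw [← hc_def] at hform1 hform2
  have hlt : (x : V → ℝ) ⬝ᵥ (A *ᵥ (x : V → ℝ)) < κ * ((x : V → ℝ) ⬝ᵥ (x : V → ℝ)) := by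
    rw [hform1, hform2, Finset.mul_sum]
    refine Finset.sum_lt_sum (fun i _ => ?_) ⟨i0, Finset.mem_univ _, ?_⟩
    · by_cases hiP : hA.eigenvalues i < κ
      · nlinarith [sq_nonneg ((c : V → ℝ) i)]
      · have : (c : V → ℝ) i = 0 := hcQ i (Finset.mem_filter.2 ⟨Finset.mem_univ _, hiP⟩)
        rw [this]; simp
    · have : 0 < ((c : V → ℝ) i0)^2 := by positivity
      nlinarith
  exact absurd (hray (x : V → ℝ) hxsupp) (not_le.2 hlt)


theorem hl_aux_sorted_getElem_le_of_count {l : List ℝ} (hs : l.Pairwise (· ≤ ·)) {t : ℕ}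
    (ht : t < l.length) (κ : ℝ)
    (hcnt : l.countP (fun a => decide (κ < a)) ≤ l.length - t - 1) :
    l[t] ≤ κ := by
  by_contra hgt
  push_neg at hgt
  have hall : ∀ a ∈ l.drop t, κ < a := by
    intro a ha
    obtain ⟨i, hi, rfl⟩ := List.mem_iff_getElem.1 ha
    rw [List.getElem_drop]
    have hti : t ≤ t + i := Nat.le_add_right t i
    have hlt : t + i < l.length := by
      have := List.length_drop (i := t) (l := l)
      omega
    calc κ < l[t] := hgt
      _ ≤ l[t + i] := by
        have := hs.rel_get_of_le (a := ⟨t, ht⟩) (b := ⟨t + i, hlt⟩) (by simp [Fin.le_def])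
        simpa using this
  have hdropcnt : (l.drop t).countP (fun a => decide (κ < a)) = l.length - t := by
    rw [List.countP_eq_length.2 (fun a ha => by simpa using hall a ha), List.length_drop]
  have hsplit : l.countP (fun a => decide (κ < a)) =
      (l.take t).countP (fun a => decide (κ < a)) + (l.drop t).countP (fun a => decide (κ < a)) := by
    conv_lhs => rw [← List.take_append_drop t l]
    exact List.countP_append
  omega

theorem hl_aux_sorted_le_getElem_of_count {l : List ℝ} (hs : l.Pairwise (· ≤ ·)) {t : ℕ}
    (ht : t < l.length) (κ : ℝ)
    (hcnt : l.countP (fun a => decide (a < κ)) ≤ t) :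
    κ ≤ l[t] := by
  by_contra hgt
  push_neg at hgt
  have hall : ∀ a ∈ l.take (t + 1), a < κ := by
    intro a ha
    obtain ⟨i, hi, rfl⟩ := List.mem_iff_getElem.1 ha
    have hlen : (l.take (t + 1)).length = t + 1 := by
      rw [List.length_take]; omega
    have hit : i ≤ t := by omega
    have hil : i < l.length := by omega
    rw [List.getElem_take]
    calc l[i] ≤ l[t] := by
          have := hs.rel_get_of_le (a := ⟨i, hil⟩) (b := ⟨t, ht⟩) (by simp [Fin.le_def, hit])
          simpa using this
      _ < κ := hgt
  have htakecnt : (l.take (t + 1)).countP (fun a => decide (a < κ)) = t + 1 := by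
    rw [List.countP_eq_length.2 (fun a ha => by simpa using hall a ha), List.length_take]
    omega
  have hsplit : l.countP (fun a => decide (a < κ)) =
      (l.take (t + 1)).countP (fun a => decide (a < κ))
        + (l.drop (t + 1)).countP (fun a => decide (a < κ)) := by
    conv_lhs => rw [← List.take_append_drop (t + 1) l]
    exact List.countP_append
  omega

end HLAux

theorem hl_index_le_one_of_odd_order_subcubic
    {V : Type} [Fintype V] [DecidableEq V]
    (G : SimpleGraph V) [DecidableRel G.Adj]
    (hdeg : ∀ v : V, G.degree v ≤ 3)
    (hodd : Odd (Fintype.card V)) :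
    |eigval G ((Fintype.card V + 1) / 2)| ≤ 1 := by
  classical
  obtain ⟨t, ht⟩ := hodd
  obtain ⟨S, hScard, hSdeg⟩ := hl_aux_lovasz_partition G hdeg
  have hSle : S.card ≤ Fintype.card V := Finset.card_le_univ S
  set hA := adjMatrix_isHermitian G with hA_def
  have hrayU : ∀ x : V → ℝ, (∀ v ∉ S, x v = 0) →
      x ⬝ᵥ ((G.adjMatrix ℝ) *ᵥ x) ≤ 1 * (x ⬝ᵥ x) := by
    intro x hx
    rw [one_mul]
    exact (abs_le.1 (hl_aux_rayleigh_bound G S hSdeg x hx)).2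
  have hrayL : ∀ x : V → ℝ, (∀ v ∉ S, x v = 0) →
      (-1) * (x ⬝ᵥ x) ≤ x ⬝ᵥ ((G.adjMatrix ℝ) *ᵥ x) := by
    intro x hx
    rw [neg_one_mul]
    exact (abs_le.1 (hl_aux_rayleigh_bound G S hSdeg x hx)).1
  have hcGT := hl_aux_count_eig_gt hA S 1 hrayU
  have hcLT := hl_aux_count_eig_lt hA S (-1) hrayL
  set l := ((adjSpectrum G).sort (· ≤ ·)) with hl
  have hlen : l.length = Fintype.card V := by
    rw [hl, Multiset.length_sort]
    show Multiset.card (Finset.univ.val.map hA.eigenvalues) = _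
    rw [Multiset.card_map]
    exact Finset.card_univ
  have hsort : l.Pairwise (· ≤ ·) := Multiset.pairwise_sort _ _
  have htlen : t < l.length := by omega
  have hcU : l.countP (fun a => decide ((1:ℝ) < a)) =
      (Finset.univ.filter fun i => (1:ℝ) < hA.eigenvalues i).card := by
    have h1 : Multiset.countP (fun a => (1:ℝ) < a) (adjSpectrum G)
        = l.countP (fun a => decide ((1:ℝ) < a)) := by
      conv_lhs => rw [← Multiset.sort_eq (adjSpectrum G) (· ≤ ·)]
      exact Multiset.coe_countP (p := fun a => (1:ℝ) < a) _
    rw [← h1]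
    show Multiset.countP (fun a => (1:ℝ) < a) (Finset.univ.val.map hA.eigenvalues) = _
    rw [Multiset.countP_map]
    rw [Finset.card, Finset.filter_val]
  have hcL : l.countP (fun a => decide (a < (-1:ℝ))) =
      (Finset.univ.filter fun i => hA.eigenvalues i < (-1:ℝ)).card := by
    have h1 : Multiset.countP (fun a => a < (-1:ℝ)) (adjSpectrum G)
        = l.countP (fun a => decide (a < (-1:ℝ))) := by
      conv_lhs => rw [← Multiset.sort_eq (adjSpectrum G) (· ≤ ·)]
      exact Multiset.coe_countP (p := fun a => a < (-1:ℝ)) _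
    rw [← h1]
    show Multiset.countP (fun a => a < (-1:ℝ)) (Finset.univ.val.map hA.eigenvalues) = _
    rw [Multiset.countP_map]
    rw [Finset.card, Finset.filter_val]
  have e1 : eigval G ((Fintype.card V + 1) / 2) = l[t] := by
    show ((adjSpectrum G).sort (· ≤ ·)).getD (Fintype.card V - (Fintype.card V + 1) / 2) 0 = _
    rw [← hl]
    have : Fintype.card V - (Fintype.card V + 1) / 2 = t := by omega
    rw [this]
    exact List.getD_eq_getElem l 0 htlen
  rw [e1, abs_le]
  constructor
  · refine hl_aux_sorted_le_getElem_of_count hsort htlen (-1) ?_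
    rw [hcL]
    omega
  · refine hl_aux_sorted_getElem_le_of_count hsort htlen 1 ?_
    rw [hcU]
    omega
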